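/- Let Γ be an inseparable weighted oriented graph with n ≥ 5 vertices. Then Γ contains an induced subgraph on n-1 vertices that is inseparable. -/
import Mathlib


/-- A weighted oriented graph on `V`: `Γ x y = some α` means there is an arc
`(x, y)` of weight `α`; no loops and no pair of opposite arcs. -/
def WOriented {V : Type*} (Γ : V → V → Option ℝ) : Prop :=
  (∀ x, Γ x x = none) ∧ ∀ x y, Γ x y ≠ none → Γ y x = none

/-- A clan of a weighted oriented graph. -/
def WClan {V : Type*} (Γ : V → V → Option ℝ) (X : Set V) : Prop :=
  ∀ x ∉ X,
    (∀ a ∈ X, Γ x a = none ∧ Γ a x = none) ∨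
    (∃ α : ℝ, ∀ a ∈ X, Γ x a = some α) ∨
    (∃ α : ℝ, ∀ a ∈ X, Γ a x = some α)

/-- Separability: the vertex set can be partitioned into two nonempty clans. -/
def WSeparable {V : Type*} (Γ : V → V → Option ℝ) : Prop :=
  ∃ X Y : Set V, X.Nonempty ∧ Y.Nonempty ∧ Disjoint X Y ∧ X ∪ Y = Set.univ ∧
    WClan Γ X ∧ WClan Γ Y

namespace Stmt14

variable {V : Type*} (Γ : V → V → Option ℝ)

/-- label of an ordered pair -/
def lab (a b : V) : Option ℝ × Option ℝ := (Γ a b, Γ b a)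

lemma lab_swap (a b : V) : lab Γ b a = Prod.swap (lab Γ a b) := rfl

lemma lab_eq_iff_swap {a b c d : V} : lab Γ a b = lab Γ c d ↔ lab Γ b a = lab Γ d c := by
  constructor
  · intro h; rw [lab_swap Γ a b, lab_swap Γ c d, h]
  · intro h; rw [lab_swap Γ a b, lab_swap Γ c d] at h
    exact Prod.swap_injective h

/-- uniform-cut separability of a vertex subset -/
def SepOn (W : Set V) : Prop :=
  ∃ X Y : Set V, ∃ ℓ : Option ℝ × Option ℝ, X.Nonempty ∧ Y.Nonempty ∧
    Disjoint X Y ∧ X ∪ Y = W ∧ ∀ a ∈ X, ∀ b ∈ Y, lab Γ a b = ℓ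

/-- the key rigidity: a pair of mutual "clans" has a uniform label. -/
lemma clans_uniform (hΓ : WOriented Γ) (X Y : Set V) (hX : X.Nonempty)
    (h1 : ∀ y ∈ Y, (∀ a ∈ X, Γ y a = none ∧ Γ a y = none) ∨
      (∃ α : ℝ, ∀ a ∈ X, Γ y a = some α) ∨ (∃ α : ℝ, ∀ a ∈ X, Γ a y = some α))
    (h2 : ∀ x ∈ X, (∀ b ∈ Y, Γ x b = none ∧ Γ b x = none) ∨
      (∃ α : ℝ, ∀ b ∈ Y, Γ x b = some α) ∨ (∃ α : ℝ, ∀ b ∈ Y, Γ b x = some α)) :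
    ∃ ℓ, ∀ a ∈ X, ∀ b ∈ Y, lab Γ a b = ℓ := by
  obtain ⟨x₀, hx₀⟩ := hX
  rcases h2 x₀ hx₀ with hc | ⟨α, hc⟩ | ⟨α, hc⟩
  · refine ⟨(none, none), fun a ha b hb => ?_⟩
    rcases h1 b hb with hb' | ⟨β, hb'⟩ | ⟨β, hb'⟩
    · have := hb' a ha; simp [lab, this.1, this.2]
    · exact absurd ((hb' x₀ hx₀)) (by simp [(hc b hb).2])
    · exact absurd ((hb' x₀ hx₀)) (by simp [(hc b hb).1])
  · refine ⟨(some α, none), fun a ha b hb => ?_⟩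
    rcases h1 b hb with hb' | ⟨β, hb'⟩ | ⟨β, hb'⟩
    · exact absurd (hb' x₀ hx₀).2 (by simp [hc b hb])
    · have h3 : Γ b x₀ = none := hΓ.2 x₀ b (by simp [hc b hb])
      exact absurd (hb' x₀ hx₀) (by simp [h3])
    · have hab : Γ a b = some β := hb' a ha
      have : some β = some α := by rw [← hb' x₀ hx₀, hc b hb]
      have hba : Γ b a = none := hΓ.2 a b (by simp [hab])
      simp only [lab, hab, hba, Option.some_inj.mp this]
  · refine ⟨(none, some α), fun a ha b hb => ?_⟩
    rcases h1 b hb with hb' | ⟨β, hb'⟩ | ⟨β, hb'⟩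
    · exact absurd (hc b hb) (by simp [(hb' x₀ hx₀).1])
    · have hba : Γ b a = some β := hb' a ha
      have : some β = some α := by rw [← hb' x₀ hx₀, hc b hb]
      have hab : Γ a b = none := by
        have := hΓ.2 b a (by simp [hba]); exact this
      simp only [lab, hab, hba, Option.some_inj.mp this]
    · have h3 : Γ x₀ b = none := hΓ.2 b x₀ (by simp [hc b hb])
      exact absurd (hb' x₀ hx₀) (by simp [h3])

lemma sepOn_univ_toW (h : SepOn Γ Set.univ) : WSeparable Γ := by
  obtain ⟨X, Y, ℓ, hX, hY, hdis, hun, hu⟩ := h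
  refine ⟨X, Y, hX, hY, hdis, hun, ?_, ?_⟩
  · intro v hv
    have hvY : v ∈ Y := by
      have : v ∈ X ∪ Y := hun ▸ Set.mem_univ v
      rcases this with h' | h'; exact absurd h' hv; exact h'
    have key : ∀ a ∈ X, Γ a v = ℓ.1 ∧ Γ v a = ℓ.2 := by
      intro a ha
      have := hu a ha v hvY
      exact ⟨by rw [show ℓ.1 = (lab Γ a v).1 from by rw [this]]; rfl,
             by rw [show ℓ.2 = (lab Γ a v).2 from by rw [this]]; rfl⟩
    match h2 : ℓ.2, h1 : ℓ.1 with
    | some β, _ => exact Or.inr (Or.inl ⟨β, fun a ha => by rw [(key a ha).2, h2]⟩)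
    | none, some β => exact Or.inr (Or.inr ⟨β, fun a ha => by rw [(key a ha).1, h1]⟩)
    | none, none =>
      exact Or.inl (fun a ha => ⟨by rw [(key a ha).2, h2], by rw [(key a ha).1, h1]⟩)
  · intro v hv
    have hvX : v ∈ X := by
      have : v ∈ X ∪ Y := hun ▸ Set.mem_univ v
      rcases this with h' | h'; exact h'; exact absurd h' hv
    have key : ∀ b ∈ Y, Γ v b = ℓ.1 ∧ Γ b v = ℓ.2 := by
      intro b hb
      have := hu v hvX b hb
      exact ⟨by rw [show ℓ.1 = (lab Γ v b).1 from by rw [this]]; rfl,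
             by rw [show ℓ.2 = (lab Γ v b).2 from by rw [this]]; rfl⟩
    match h1 : ℓ.1, h2 : ℓ.2 with
    | some β, _ => exact Or.inr (Or.inl ⟨β, fun b hb => by rw [(key b hb).1, h1]⟩)
    | none, some β => exact Or.inr (Or.inr ⟨β, fun b hb => by rw [(key b hb).2, h2]⟩)
    | none, none =>
      exact Or.inl (fun b hb => ⟨by rw [(key b hb).1, h1], by rw [(key b hb).2, h2]⟩)

/-- the goal-side bridge -/
lemma wsep_sub_toSepOn (hΓ : WOriented Γ) (x : V)
    (h : WSeparable (fun a b : {y : V // y ≠ x} => Γ (a : V) (b : V))) :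
    SepOn Γ {x}ᶜ := by
  obtain ⟨X', Y', hX', hY', hdis', hun', hcX', hcY'⟩ := h
  set X : Set V := Subtype.val '' X' with hXdef
  set Y : Set V := Subtype.val '' Y' with hYdef
  have hX : X.Nonempty := hX'.image _
  have hY : Y.Nonempty := hY'.image _
  have hdis : Disjoint X Y := by
    rw [Set.disjoint_iff_inter_eq_empty]
    ext v; simp only [Set.mem_inter_iff, Set.mem_empty_iff_false, iff_false]
    rintro ⟨⟨a, ha, rfl⟩, ⟨b, hb, hba⟩⟩
    have : b = a := Subtype.ext hba
    exact (Set.disjoint_left.mp hdis' ha) (this ▸ hb)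
  have hun : X ∪ Y = {x}ᶜ := by
    rw [hXdef, hYdef, ← Set.image_union, hun', Set.image_univ, Subtype.range_coe_subtype]
    ext v; simp [eq_comm]
  have h1 : ∀ y ∈ Y, (∀ a ∈ X, Γ y a = none ∧ Γ a y = none) ∨
      (∃ α : ℝ, ∀ a ∈ X, Γ y a = some α) ∨ (∃ α : ℝ, ∀ a ∈ X, Γ a y = some α) := by
    rintro y ⟨y', hy', rfl⟩
    have hy'X : y' ∉ X' := Set.disjoint_right.mp hdis' hy'
    rcases hcX' y' hy'X with hc | ⟨α, hc⟩ | ⟨α, hc⟩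
    · exact Or.inl (by rintro a ⟨a', ha', rfl⟩; exact hc a' ha')
    · exact Or.inr (Or.inl ⟨α, by rintro a ⟨a', ha', rfl⟩; exact hc a' ha'⟩)
    · exact Or.inr (Or.inr ⟨α, by rintro a ⟨a', ha', rfl⟩; exact hc a' ha'⟩)
  have h2 : ∀ u ∈ X, (∀ b ∈ Y, Γ u b = none ∧ Γ b u = none) ∨
      (∃ α : ℝ, ∀ b ∈ Y, Γ u b = some α) ∨ (∃ α : ℝ, ∀ b ∈ Y, Γ b u = some α) := by
    rintro u ⟨u', hu', rfl⟩
    have hu'Y : u' ∉ Y' := Set.disjoint_left.mp hdis' hu'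
    rcases hcY' u' hu'Y with hc | ⟨α, hc⟩ | ⟨α, hc⟩
    · exact Or.inl (by rintro b ⟨b', hb', rfl⟩; exact hc b' hb')
    · exact Or.inr (Or.inl ⟨α, by rintro b ⟨b', hb', rfl⟩; exact hc b' hb'⟩)
    · exact Or.inr (Or.inr ⟨α, by rintro b ⟨b', hb', rfl⟩; exact hc b' hb'⟩)
  obtain ⟨ℓ, hℓ⟩ := clans_uniform Γ hΓ X Y hX h1 h2
  exact ⟨X, Y, ℓ, hX, hY, hdis, hun, hℓ⟩

lemma sep_pair {a b : V} (hab : a ≠ b) : SepOn Γ {a, b} := by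
  refine ⟨{a}, {b}, lab Γ a b, ⟨a, rfl⟩, ⟨b, rfl⟩, by simp [hab], by simp [Set.pair_comm], ?_⟩
  rintro u rfl v rfl; rfl

lemma not_sepOn_singleton (x : V) : ¬ SepOn Γ {x} := by
  rintro ⟨X, Y, ℓ, ⟨u, hu⟩, ⟨v, hv⟩, hdis, hun, -⟩
  have hu' : u ∈ ({x} : Set V) := hun ▸ Set.mem_union_left _ hu
  have hv' : v ∈ ({x} : Set V) := hun ▸ Set.mem_union_right _ hv
  rw [Set.mem_singleton_iff] at hu' hv'
  exact Set.disjoint_left.mp hdis hu (by rw [hu', ← hv']; exact hv)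


lemma tri_cases {p q r : V} (h : SepOn Γ {p, q, r}) :
    lab Γ p q = lab Γ p r ∨ lab Γ q p = lab Γ q r ∨ lab Γ r p = lab Γ r q := by
  obtain ⟨X, Y, ℓ, hXn, hYn, hdis, hun, hu⟩ := h
  have S : ∀ {a b c d : V}, lab Γ a b = lab Γ c d → lab Γ b a = lab Γ d c :=
    fun h => (lab_eq_iff_swap Γ).mp h
  have hmem : ∀ z ∈ ({p, q, r} : Set V), z ∈ X ∨ z ∈ Y := by
    intro z hz; rw [← hun] at hz; exact hz
  have bad : ∀ z, z ∈ X → z ∈ Y → False := fun z h1 h2 => Set.disjoint_left.mp hdis h1 h2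
  have hp := hmem p (by simp); have hq := hmem q (by simp); have hr := hmem r (by simp)
  have allX : p ∈ X → q ∈ X → r ∈ X → False := by
    intro h1 h2 h3
    obtain ⟨y, hy⟩ := hYn
    have : y ∈ ({p, q, r} : Set V) := by rw [← hun]; exact Or.inr hy
    rcases this with h | h | h
    · exact bad y (h ▸ h1) hy
    · exact bad y (h ▸ h2) hy
    · exact bad y (h ▸ h3) hy
  have allY : p ∈ Y → q ∈ Y → r ∈ Y → False := by
    intro h1 h2 h3
    obtain ⟨y, hy⟩ := hXn
    have : y ∈ ({p, q, r} : Set V) := by rw [← hun]; exact Or.inl hy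
    rcases this with h | h | h
    · exact bad y hy (h ▸ h1)
    · exact bad y hy (h ▸ h2)
    · exact bad y hy (h ▸ h3)
  rcases hp with hp | hp <;> rcases hq with hq | hq <;> rcases hr with hr | hr
  · exact absurd (allX hp hq hr) not_false
  · exact Or.inr (Or.inr (S ((hu p hp r hr).trans (hu q hq r hr).symm)))
  · exact Or.inr (Or.inl (S ((hu p hp q hq).trans (hu r hr q hq).symm)))
  · exact Or.inl ((hu p hp q hq).trans (hu p hp r hr).symm)
  · exact Or.inl (S ((hu q hq p hp).trans (hu r hr p hp).symm))
  · exact Or.inr (Or.inl ((hu q hq p hp).trans (hu q hq r hr).symm))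
  · exact Or.inr (Or.inr ((hu r hr p hp).trans (hu r hr q hq).symm))
  · exact absurd (allY hp hq hr) not_false

lemma quad_cases {p q r s : V} (h : SepOn Γ {p, q, r, s}) :
    (lab Γ p q = lab Γ p r ∧ lab Γ p q = lab Γ p s) ∨
    (lab Γ q p = lab Γ q r ∧ lab Γ q p = lab Γ q s) ∨
    (lab Γ r p = lab Γ r q ∧ lab Γ r p = lab Γ r s) ∨
    (lab Γ s p = lab Γ s q ∧ lab Γ s p = lab Γ s r) ∨
    (lab Γ p r = lab Γ p s ∧ lab Γ q r = lab Γ q s ∧ lab Γ p r = lab Γ q r) ∨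
    (lab Γ p q = lab Γ p s ∧ lab Γ r q = lab Γ r s ∧ lab Γ p q = lab Γ r q) ∨
    (lab Γ p q = lab Γ p r ∧ lab Γ s q = lab Γ s r ∧ lab Γ p q = lab Γ s q) := by
  obtain ⟨X, Y, ℓ, hXn, hYn, hdis, hun, hu⟩ := h
  have S : ∀ {a b c d : V}, lab Γ a b = lab Γ c d → lab Γ b a = lab Γ d c :=
    fun h => (lab_eq_iff_swap Γ).mp h
  have hmem : ∀ z ∈ ({p, q, r, s} : Set V), z ∈ X ∨ z ∈ Y := by
    intro z hz; rw [← hun] at hz; exact hz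
  have bad : ∀ z, z ∈ X → z ∈ Y → False := fun z h1 h2 => Set.disjoint_left.mp hdis h1 h2
  have hp := hmem p (by simp); have hq := hmem q (by simp)
  have hr := hmem r (by simp); have hs := hmem s (by simp)
  have allX : p ∈ X → q ∈ X → r ∈ X → s ∈ X → False := by
    intro h1 h2 h3 h4
    obtain ⟨y, hy⟩ := hYn
    have : y ∈ ({p, q, r, s} : Set V) := by rw [← hun]; exact Or.inr hy
    rcases this with h | h | h | h
    · exact bad y (h ▸ h1) hy
    · exact bad y (h ▸ h2) hy
    · exact bad y (h ▸ h3) hy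
    · exact bad y (h ▸ h4) hy
  have allY : p ∈ Y → q ∈ Y → r ∈ Y → s ∈ Y → False := by
    intro h1 h2 h3 h4
    obtain ⟨y, hy⟩ := hXn
    have : y ∈ ({p, q, r, s} : Set V) := by rw [← hun]; exact Or.inl hy
    rcases this with h | h | h | h
    · exact bad y hy (h ▸ h1)
    · exact bad y hy (h ▸ h2)
    · exact bad y hy (h ▸ h3)
    · exact bad y hy (h ▸ h4)
  rcases hp with hp | hp <;> rcases hq with hq | hq <;>
    rcases hr with hr | hr <;> rcases hs with hs | hs
  · exact absurd (allX hp hq hr hs) not_false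
  · -- XXXY : s alone in Y
    exact Or.inr (Or.inr (Or.inr (Or.inl
      ⟨S ((hu p hp s hs).trans (hu q hq s hs).symm),
       S ((hu p hp s hs).trans (hu r hr s hs).symm)⟩)))
  · -- XXYX : r alone in Y
    exact Or.inr (Or.inr (Or.inl
      ⟨S ((hu p hp r hr).trans (hu q hq r hr).symm),
       S ((hu p hp r hr).trans (hu s hs r hr).symm)⟩))
  · -- XXYY : {p,q}|{r,s}
    exact Or.inr (Or.inr (Or.inr (Or.inr (Or.inl
      ⟨(hu p hp r hr).trans (hu p hp s hs).symm,
       (hu q hq r hr).trans (hu q hq s hs).symm,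
       (hu p hp r hr).trans (hu q hq r hr).symm⟩))))
  · -- XYXX : q alone in Y
    exact Or.inr (Or.inl
      ⟨S ((hu p hp q hq).trans (hu r hr q hq).symm),
       S ((hu p hp q hq).trans (hu s hs q hq).symm)⟩)
  · -- XYXY : {p,r}|{q,s}
    exact Or.inr (Or.inr (Or.inr (Or.inr (Or.inr (Or.inl
      ⟨(hu p hp q hq).trans (hu p hp s hs).symm,
       (hu r hr q hq).trans (hu r hr s hs).symm,
       (hu p hp q hq).trans (hu r hr q hq).symm⟩)))))
  · -- XYYX : {p,s}|{q,r}
    exact Or.inr (Or.inr (Or.inr (Or.inr (Or.inr (Or.inr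
      ⟨(hu p hp q hq).trans (hu p hp r hr).symm,
       (hu s hs q hq).trans (hu s hs r hr).symm,
       (hu p hp q hq).trans (hu s hs q hq).symm⟩)))))
  · -- XYYY : p alone in X
    exact Or.inl ⟨(hu p hp q hq).trans (hu p hp r hr).symm,
                  (hu p hp q hq).trans (hu p hp s hs).symm⟩
  · -- YXXX : p alone in Y
    exact Or.inl ⟨S ((hu q hq p hp).trans (hu r hr p hp).symm),
                  S ((hu q hq p hp).trans (hu s hs p hp).symm)⟩
  · -- YXXY : {q,r}|{p,s} i.e. O7 swapped
    exact Or.inr (Or.inr (Or.inr (Or.inr (Or.inr (Or.inr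
      ⟨S ((hu q hq p hp).trans (hu r hr p hp).symm),
       S ((hu q hq s hs).trans (hu r hr s hs).symm),
       S ((hu q hq p hp).trans (hu q hq s hs).symm)⟩)))))
  · -- YXYX : {q,s}|{p,r} : O6 swapped
    exact Or.inr (Or.inr (Or.inr (Or.inr (Or.inr (Or.inl
      ⟨S ((hu q hq p hp).trans (hu s hs p hp).symm),
       S ((hu q hq r hr).trans (hu s hs r hr).symm),
       S ((hu q hq p hp).trans (hu q hq r hr).symm)⟩)))))
  · -- YXYY : q alone in X
    exact Or.inr (Or.inl ⟨(hu q hq p hp).trans (hu q hq r hr).symm,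
                          (hu q hq p hp).trans (hu q hq s hs).symm⟩)
  · -- YYXX : {r,s}|{p,q} : O5 swapped
    exact Or.inr (Or.inr (Or.inr (Or.inr (Or.inl
      ⟨S ((hu r hr p hp).trans (hu s hs p hp).symm),
       S ((hu r hr q hq).trans (hu s hs q hq).symm),
       S ((hu r hr p hp).trans (hu r hr q hq).symm)⟩))))
  · -- YYXY : r alone in X
    exact Or.inr (Or.inr (Or.inl ⟨(hu r hr p hp).trans (hu r hr q hq).symm,
                                  (hu r hr p hp).trans (hu r hr s hs).symm⟩))
  · -- YYYX : s alone in X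
    exact Or.inr (Or.inr (Or.inr (Or.inl ⟨(hu s hs p hp).trans (hu s hs q hq).symm,
                                          (hu s hs p hp).trans (hu s hs r hr).symm⟩)))
  · exact absurd (allY hp hq hr hs) not_false

/-- typing of outside vertices w.r.t. an inseparable set -/
lemma typing {A : Set V} (hA : ¬ SepOn Γ A) {w : V} (hw : w ∉ A)
    (hsep : SepOn Γ (insert w A)) : ∃ t, ∀ a ∈ A, lab Γ w a = t := by
  obtain ⟨X, Y, ℓ, hXn, hYn, hdis, hun, hu⟩ := hsep
  by_cases hX1 : X = {w}
  · refine ⟨ℓ, fun a ha => ?_⟩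
    have haY : a ∈ Y := by
      have : a ∈ X ∪ Y := by rw [hun]; exact Set.mem_insert_of_mem _ ha
      rcases this with h | h
      · rw [hX1] at h; exact absurd (h ▸ ha) hw
      · exact h
    exact hu w (by rw [hX1]; rfl) a haY
  by_cases hY1 : Y = {w}
  · refine ⟨Prod.swap ℓ, fun a ha => ?_⟩
    have haX : a ∈ X := by
      have : a ∈ X ∪ Y := by rw [hun]; exact Set.mem_insert_of_mem _ ha
      rcases this with h | h
      · exact h
      · rw [hY1] at h; exact absurd (h ▸ ha) hw
    rw [lab_swap Γ a w, hu a haX w (by rw [hY1]; rfl)]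
  exfalso
  apply hA
  refine ⟨X \ {w}, Y \ {w}, ℓ, ?_, ?_, ?_, ?_, ?_⟩
  · rw [Set.nonempty_iff_ne_empty]
    intro he
    exact hX1 (Set.eq_singleton_iff_nonempty_unique_mem.mpr
      ⟨hXn, fun z hz => by
        by_contra hzw
        exact (Set.eq_empty_iff_forall_notMem.mp he z) ⟨hz, hzw⟩⟩)
  · rw [Set.nonempty_iff_ne_empty]
    intro he
    exact hY1 (Set.eq_singleton_iff_nonempty_unique_mem.mpr
      ⟨hYn, fun z hz => by
        by_contra hzw
        exact (Set.eq_empty_iff_forall_notMem.mp he z) ⟨hz, hzw⟩⟩)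
  · exact (hdis.mono (Set.diff_subset) (Set.diff_subset))
  · rw [← Set.union_diff_distrib, hun]
    rw [Set.insert_diff_of_mem _ (Set.mem_singleton w)]
    exact Set.diff_singleton_eq_self hw
  · intro a ha b hb; exact hu a ha.1 b hb.1

/-- Case 3 ≤ |A| : every vertex of a maximum inseparable set works. -/
lemma case_mid {A : Set V} (hU : ¬ SepOn Γ Set.univ) (hA : ¬ SepOn Γ A)
    (hproper : A ≠ Set.univ)
    (htype : ∀ w ∉ A, ∃ t, ∀ a ∈ A, lab Γ w a = t)
    (hA2 : ∀ a ∈ A, ∃ a' ∈ A, a' ≠ a) :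
    ∀ a ∈ A, ¬ SepOn Γ {a}ᶜ := by
  intro a ha hsep
  obtain ⟨X, Y, ℓ, hXn, hYn, hdis, hun, hu⟩ := hsep
  have haX : a ∉ X := fun h => by
    have : a ∈ ({a}ᶜ : Set V) := hun ▸ Set.mem_union_left _ h
    exact this rfl
  have haY : a ∉ Y := fun h => by
    have : a ∈ ({a}ᶜ : Set V) := hun ▸ Set.mem_union_right _ h
    exact this rfl
  have hmem : ∀ z : V, z ≠ a → z ∈ X ∨ z ∈ Y := by
    intro z hz
    have : z ∈ X ∪ Y := by rw [hun]; exact hz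
    exact this
  obtain ⟨a', ha', ha'a⟩ := hA2 a ha
  have bad : ∀ z, z ∈ X → z ∈ Y → False := fun z h1 h2 => Set.disjoint_left.mp hdis h1 h2
  by_cases hc1 : A \ {a} ⊆ X
  · -- lift a into X
    apply hU
    refine ⟨X ∪ {a}, Y, ℓ, hXn.mono Set.subset_union_left, hYn, ?_, ?_, ?_⟩
    · exact Set.disjoint_union_left.mpr ⟨hdis, by simpa using haY⟩
    · ext z
      simp only [Set.mem_union, Set.mem_singleton_iff, Set.mem_univ, iff_true]
      by_cases hz : z = a
      · exact Or.inl (Or.inr hz)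
      · rcases hmem z hz with h | h
        · exact Or.inl (Or.inl h)
        · exact Or.inr h
    · rintro u (hux | hua) b hb
      · exact hu u hux b hb
      · rw [Set.mem_singleton_iff] at hua
        rw [hua]
        have hbA : b ∉ A := by
          intro hbA
          have hba : b ≠ a := fun h => haY (h ▸ hb)
          exact bad b (hc1 ⟨hbA, hba⟩) hb
        obtain ⟨t, ht⟩ := htype b hbA
        have h1 : lab Γ b a = lab Γ b a' := by rw [ht a ha, ht a' ha']
        have h2 : lab Γ a b = lab Γ a' b := (lab_eq_iff_swap Γ).mpr h1
        rw [h2]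
        exact hu a' (hc1 ⟨ha', ha'a⟩) b hb
  by_cases hc2 : A \ {a} ⊆ Y
  · -- lift a into Y
    apply hU
    refine ⟨X, Y ∪ {a}, ℓ, hXn, hYn.mono Set.subset_union_left, ?_, ?_, ?_⟩
    · exact Set.disjoint_union_right.mpr ⟨hdis, by simpa using haX⟩
    · ext z
      simp only [Set.mem_union, Set.mem_singleton_iff, Set.mem_univ, iff_true]
      by_cases hz : z = a
      · exact Or.inr (Or.inr hz)
      · rcases hmem z hz with h | h
        · exact Or.inl h
        · exact Or.inr (Or.inl h)
    · rintro u hux b (hb | hba)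
      · exact hu u hux b hb
      · rw [Set.mem_singleton_iff] at hba
        rw [hba]
        have huA : u ∉ A := by
          intro huA
          have hua : u ≠ a := fun h => haX (h ▸ hux)
          exact bad u hux (hc2 ⟨huA, hua⟩)
        obtain ⟨t, ht⟩ := htype u huA
        have h1 : lab Γ u a = lab Γ u a' := by rw [ht a ha, ht a' ha']
        rw [h1]
        exact hu u hux a' (hc2 ⟨ha', ha'a⟩)
  · -- A \ {a} is split
    obtain ⟨q, hqA, hqY⟩ : ∃ q, q ∈ A \ {a} ∧ q ∈ Y := by
      obtain ⟨q, hq1, hq2⟩ := Set.not_subset.mp hc1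
      exact ⟨q, hq1, (hmem q hq1.2).resolve_left hq2⟩
    obtain ⟨p, hpA, hpX⟩ : ∃ p, p ∈ A \ {a} ∧ p ∈ X := by
      obtain ⟨p, hp1, hp2⟩ := Set.not_subset.mp hc2
      exact ⟨p, hp1, (hmem p hp1.2).resolve_right hp2⟩
    -- outside vertices in X have uniform label ℓ towards A ; in Y, swap ℓ
    have hSfact : ∀ u ∈ X, u ∉ A → ∀ z ∈ A, lab Γ u z = ℓ := by
      intro u huX huA z hz
      obtain ⟨t, ht⟩ := htype u huA
      rw [ht z hz, ← ht q hqA.1]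
      exact hu u huX q hqY
    have hTfact : ∀ w ∈ Y, w ∉ A → ∀ z ∈ A, lab Γ w z = Prod.swap ℓ := by
      intro w hwY hwA z hz
      obtain ⟨t, ht⟩ := htype w hwA
      rw [ht z hz, ← ht p hpA.1, lab_swap Γ p w, hu p hpX w hwY]
    by_cases hSne : ∃ u ∈ X, u ∉ A
    · obtain ⟨u₀, hu₀X, hu₀A⟩ := hSne
      apply hU
      refine ⟨{u | u ∈ X ∧ u ∉ A}, {u | u ∈ X ∧ u ∉ A}ᶜ, ℓ, ⟨u₀, hu₀X, hu₀A⟩,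
        ⟨a, fun hc => hc.2 ha⟩, disjoint_compl_right, Set.union_compl_self _, ?_⟩
      rintro u ⟨huX, huA⟩ z hz
      by_cases hzA : z ∈ A
      · exact hSfact u huX huA z hzA
      · have hza : z ≠ a := fun h => hzA (h ▸ ha)
        rcases hmem z hza with h | h
        · exact absurd ⟨h, hzA⟩ hz
        · exact hu u huX z h
    · push_neg at hSne
      by_cases hTne : ∃ w ∈ Y, w ∉ A
      · obtain ⟨w₀, hw₀Y, hw₀A⟩ := hTne
        apply hU
        refine ⟨Aᶜ, A, Prod.swap ℓ, ⟨w₀, hw₀A⟩, ⟨a, ha⟩, disjoint_compl_left,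
          Set.compl_union_self _, ?_⟩
        rintro w hwA z hz
        have hwa : w ≠ a := fun h => hwA (h ▸ ha)
        rcases hmem w hwa with h | h
        · exact absurd (hSne w h) hwA
        · exact hTfact w h hwA z hz
      · push_neg at hTne
        apply hproper
        ext z
        simp only [Set.mem_univ, iff_true]
        by_contra hzA
        have hza : z ≠ a := fun h => hzA (h ▸ ha)
        rcases hmem z hza with h | h
        · exact hzA (hSne z h)  -- hSne now pushed
        · exact hzA (hTne z h)

/-- Base case: no inseparable proper subset of size ≥ 2 is impossible. -/
lemma case_base {v : V} (hU : ¬ SepOn Γ Set.univ) (hsepv : SepOn Γ {v}ᶜ)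
    (htri : ∀ p q r : V, p ≠ q → p ≠ r → q ≠ r → SepOn Γ {p, q, r})
    (hquad : ∀ p q r s : V, p ≠ q → p ≠ r → p ≠ s → q ≠ r → q ≠ s → r ≠ s →
      SepOn Γ {p, q, r, s}) : False := by
  obtain ⟨X, Y, ℓ, hXn, hYn, hdis, hun, hu⟩ := hsepv
  have S : ∀ {a b c d : V}, lab Γ a b = lab Γ c d → lab Γ b a = lab Γ d c :=
    fun h => (lab_eq_iff_swap Γ).mp h
  have hvX : v ∉ X := fun h => (hun ▸ Set.mem_union_left Y h : v ∈ ({v}ᶜ : Set V)) rfl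
  have hvY : v ∉ Y := fun h => (hun ▸ Set.mem_union_right X h : v ∈ ({v}ᶜ : Set V)) rfl
  have hmem : ∀ z : V, z ≠ v → z ∈ X ∨ z ∈ Y := fun z hz => (hun ▸ hz : z ∈ X ∪ Y)
  have bad : ∀ z, z ∈ X → z ∈ Y → False := fun z h1 h2 => Set.disjoint_left.mp hdis h1 h2
  have neXv : ∀ z ∈ X, z ≠ v := fun z hz h => hvX (h ▸ hz)
  have neYv : ∀ z ∈ Y, z ≠ v := fun z hz h => hvY (h ▸ hz)
  -- breaking witnesses
  have B1 : ∃ y₀ ∈ Y, lab Γ v y₀ ≠ ℓ := by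
    by_contra hB
    push_neg at hB
    apply hU
    refine ⟨X ∪ {v}, Y, ℓ, hXn.mono Set.subset_union_left, hYn,
      Set.disjoint_union_left.mpr ⟨hdis, by simpa using hvY⟩, ?_, ?_⟩
    · ext z
      simp only [Set.mem_union, Set.mem_singleton_iff, Set.mem_univ, iff_true]
      by_cases hz : z = v
      · exact Or.inl (Or.inr hz)
      · rcases hmem z hz with h | h
        · exact Or.inl (Or.inl h)
        · exact Or.inr h
    · rintro u (h | h) b hb
      · exact hu u h b hb
      · rw [Set.mem_singleton_iff] at h; rw [h]; exact hB b hb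
  have B2 : ∃ x₀ ∈ X, lab Γ x₀ v ≠ ℓ := by
    by_contra hB
    push_neg at hB
    apply hU
    refine ⟨X, Y ∪ {v}, ℓ, hXn, hYn.mono Set.subset_union_left,
      Set.disjoint_union_right.mpr ⟨hdis, by simpa using hvX⟩, ?_, ?_⟩
    · ext z
      simp only [Set.mem_union, Set.mem_singleton_iff, Set.mem_univ, iff_true]
      by_cases hz : z = v
      · exact Or.inr (Or.inr hz)
      · rcases hmem z hz with h | h
        · exact Or.inl h
        · exact Or.inr (Or.inl h)
    · rintro u hux b (hb | hb)
      · exact hu u hux b hb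
      · rw [Set.mem_singleton_iff] at hb; rw [hb]; exact hB u hux
  obtain ⟨y₀, hy₀Y, hy₀⟩ := B1
  obtain ⟨x₀, hx₀X, hx₀⟩ := B2
  set μ := lab Γ v y₀ with hμdef
  have hμℓ : μ ≠ ℓ := hy₀
  -- triple (v, x₀, y₀) gives lab v x₀ = μ
  have hvx₀ : lab Γ v x₀ = μ := by
    rcases tri_cases Γ (htri v x₀ y₀ (neXv x₀ hx₀X).symm (neYv y₀ hy₀Y).symm (fun h => bad x₀ hx₀X (h ▸ hy₀Y))) with h | h | h
    · exact h
    · exact absurd (h.trans (hu x₀ hx₀X y₀ hy₀Y)) hx₀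
    · exact absurd ((S h).trans (hu x₀ hx₀X y₀ hy₀Y)) hμℓ
  have hμsℓ : μ ≠ Prod.swap ℓ := by
    intro h
    apply hx₀
    rw [lab_swap Γ x₀ v] at hvx₀
    exact Prod.swap_injective (hvx₀.trans h)
  -- dichotomy on X
  have hdX : ∀ a ∈ X, lab Γ v a = μ ∨ lab Γ a v = ℓ := by
    intro a haX
    rcases tri_cases Γ (htri v a y₀ (neXv a haX).symm (neYv y₀ hy₀Y).symm (fun h => bad a haX (h ▸ hy₀Y))) with h | h | h
    · exact Or.inl (h.trans hμdef.symm)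
    · exact Or.inr (h.trans (hu a haX y₀ hy₀Y))
    · exact absurd ((S h).trans (hu a haX y₀ hy₀Y)) hμℓ
  -- dichotomy on Y
  have hdY : ∀ y ∈ Y, lab Γ v y = μ ∨ lab Γ v y = ℓ := by
    intro y hyY
    rcases tri_cases Γ (htri v x₀ y (neXv x₀ hx₀X).symm (neYv y hyY).symm (fun h => bad x₀ hx₀X (h ▸ hyY))) with h | h | h
    · exact Or.inl (h.symm.trans hvx₀)
    · exact absurd (h.trans (hu x₀ hx₀X y hyY)) hx₀
    · exact Or.inr ((S h).trans (hu x₀ hx₀X y hyY))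
  -- quad fact 1
  have h41 : ∀ a ∈ X, lab Γ v a = μ → ∀ w ∈ X, lab Γ w v = ℓ → lab Γ w a = ℓ := by
    intro a haX haμ w hwX hwℓ
    have hvw : lab Γ v w = Prod.swap ℓ := by rw [lab_swap Γ w v, hwℓ]
    have haw : a ≠ w := by
      rintro rfl
      exact hμsℓ (haμ.symm.trans hvw)
    have hay : lab Γ a y₀ = ℓ := hu a haX y₀ hy₀Y
    have hwy : lab Γ w y₀ = ℓ := hu w hwX y₀ hy₀Y
    rcases quad_cases Γ (hquad v a y₀ w (neXv a haX).symm (neYv y₀ hy₀Y).symm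
      (neXv w hwX).symm (fun h => bad a haX (h ▸ hy₀Y)) haw
      (fun h => bad w hwX (h ▸ hy₀Y))) with
      ⟨h1, h2⟩ | ⟨h1, h2⟩ | ⟨h1, h2⟩ | ⟨h1, h2⟩ | ⟨h1, h2, h3⟩ | ⟨h1, h2, h3⟩ | ⟨h1, h2, h3⟩
    · exact absurd (haμ.symm.trans (h2.trans hvw)) hμsℓ
    · -- lab a v = lab a y₀ : swap μ = ℓ
      have e : lab Γ a v = ℓ := h1.trans hay
      have e2 : lab Γ v a = Prod.swap ℓ := by rw [lab_swap Γ a v, e]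
      exact absurd (haμ.symm.trans e2) hμsℓ
    · -- lab y₀ v = lab y₀ a
      exact absurd ((S h1).trans hay) hμℓ
    · -- w const : lab w v = lab w a
      exact (h1.symm.trans hwℓ : _)
    · -- O5 : lab v y₀ = lab v w
      exact absurd (hμdef.trans (h1.trans hvw)) hμsℓ
    · -- O6 : lab v a = lab v w
      exact absurd (haμ.symm.trans (h1.trans hvw)) hμsℓ
    · -- O7 : lab v a = lab v y₀ ∧ lab w a = lab w y₀ ∧ lab v a = lab w a
      exact absurd (haμ.symm.trans (h3.trans (h2.trans hwy))) hμℓ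
  -- quad fact 2
  have h42 : ∀ y ∈ Y, lab Γ v y = μ → ∀ y' ∈ Y, lab Γ v y' = ℓ → lab Γ y y' = ℓ := by
    intro y hyY hyμ y' hy'Y hy'ℓ
    have hyy' : y ≠ y' := by
      rintro rfl
      exact hμℓ (hyμ.symm.trans hy'ℓ)
    have hx0y : lab Γ x₀ y = ℓ := hu x₀ hx₀X y hyY
    have hx0y' : lab Γ x₀ y' = ℓ := hu x₀ hx₀X y' hy'Y
    rcases quad_cases Γ (hquad v x₀ y y' (neXv x₀ hx₀X).symm (neYv y hyY).symm
      (neYv y' hy'Y).symm (fun h => bad x₀ hx₀X (h ▸ hyY))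
      (fun h => bad x₀ hx₀X (h ▸ hy'Y)) hyy') with
      ⟨h1, h2⟩ | ⟨h1, h2⟩ | ⟨h1, h2⟩ | ⟨h1, h2⟩ | ⟨h1, h2, h3⟩ | ⟨h1, h2, h3⟩ | ⟨h1, h2, h3⟩
    · exact absurd (hvx₀.symm.trans (h2.trans hy'ℓ)) hμℓ
    · exact absurd (h1.trans hx0y) hx₀
    · exact absurd (hyμ.symm.trans ((S h1).trans hx0y)) hμℓ
    · -- y' const : lab y' v = lab y' x₀ ∧ lab y' v = lab y' y
      have e1 : lab Γ v y' = lab Γ x₀ y' := S h1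
      have e2 : lab Γ v y' = lab Γ y y' := S h2
      exact (e2.symm.trans hy'ℓ : _)
    · exact absurd (hyμ.symm.trans (h1.trans hy'ℓ)) hμℓ
    · exact absurd (hvx₀.symm.trans (h1.trans hy'ℓ)) hμℓ
    · have e : lab Γ y' x₀ = Prod.swap ℓ := by rw [lab_swap Γ x₀ y', hx0y']
      exact absurd (hvx₀.symm.trans (h3.trans e)) hμsℓ
  -- X has no ℓ-vertices
  have hXμ : ∀ u ∈ X, lab Γ v u = μ := by
    intro u huX
    rcases hdX u huX with h | h
    · exact h
    · exfalso
      apply hU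
      refine ⟨{z | z ∈ X ∧ lab Γ z v = ℓ}, {z | z ∈ X ∧ lab Γ z v = ℓ}ᶜ, ℓ,
        ⟨u, huX, h⟩, ⟨v, fun hc => hvX hc.1⟩, disjoint_compl_right,
        Set.union_compl_self _, ?_⟩
      rintro w ⟨hwX, hwℓ⟩ z hz
      by_cases hzv : z = v
      · rw [hzv]; exact hwℓ
      · rcases hmem z hzv with h' | h'
        · have : lab Γ v z = μ := by
            rcases hdX z h' with h'' | h''
            · exact h''
            · exact absurd ⟨h', h''⟩ hz
          exact h41 z h' this w hwX hwℓ
        · exact hu w hwX z h'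
  -- Y has no ℓ-vertices
  have hYμ : ∀ y ∈ Y, lab Γ v y = μ := by
    intro y hyY
    rcases hdY y hyY with h | h
    · exact h
    · exfalso
      apply hU
      refine ⟨{z | z ∈ Y ∧ lab Γ v z = ℓ}ᶜ, {z | z ∈ Y ∧ lab Γ v z = ℓ}, ℓ,
        ⟨v, fun hc => hvY hc.1⟩, ⟨y, hyY, h⟩, disjoint_compl_left,
        Set.compl_union_self _, ?_⟩
      rintro z hz y' ⟨hy'Y, hy'ℓ⟩
      by_cases hzv : z = v
      · rw [hzv]; exact hy'ℓ
      · rcases hmem z hzv with h' | h'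
        · exact hu z h' y' hy'Y
        · have : lab Γ v z = μ := by
            rcases hdY z h' with h'' | h''
            · exact h''
            · exact absurd ⟨h', h''⟩ hz
          exact h42 z h' this y' hy'Y hy'ℓ
  -- v is constant : contradiction
  apply hU
  refine ⟨{v}, {v}ᶜ, μ, ⟨v, rfl⟩, ?_, disjoint_compl_right, Set.union_compl_self _, ?_⟩
  · obtain ⟨u, huX⟩ := hXn
    exact ⟨u, neXv u huX⟩
  · rintro a ha z hz
    rw [Set.mem_singleton_iff] at ha
    rw [ha]
    rcases hmem z hz with h | h
    · exact hXμ z h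
    · exact hYμ z h

end Stmt14

open Stmt14 in
theorem stmt14 {n : ℕ} (hn : 5 ≤ n) (Γ : Fin n → Fin n → Option ℝ)
    (hΓ : WOriented Γ) (h : ¬ WSeparable Γ) :
    ∃ x : Fin n,
      ¬ WSeparable (fun a b : {y : Fin n // y ≠ x} => Γ (a : Fin n) (b : Fin n)) := by
  classical
  have hU : ¬ SepOn Γ Set.univ := fun hs => h (sepOn_univ_toW Γ hs)
  suffices hx : ∃ x : Fin n, ¬ SepOn Γ {x}ᶜ by
    obtain ⟨x, hx⟩ := hx
    exact ⟨x, fun hw => hx (wsep_sub_toSepOn Γ hΓ x hw)⟩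
  set P : Finset (Fin n) → Prop :=
    fun F => (↑F : Set (Fin n)) ≠ Set.univ ∧ ¬ SepOn Γ ↑F with hPdef
  letI : DecidablePred P := Classical.decPred P
  have hv0 : 0 < n := by omega
  set v0 : Fin n := ⟨0, hv0⟩ with hv0def
  have h1P : P {v0} := by
    constructor
    · intro he
      have h5 : (1 : ℕ) < n := by omega
      have : (⟨1, h5⟩ : Fin n) ∈ (↑({v0} : Finset (Fin n)) : Set (Fin n)) :=
        he ▸ Set.mem_univ _
      simp only [Finset.coe_singleton, Set.mem_singleton_iff] at this
      exact absurd (congrArg Fin.val this) (by simp [hv0def])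
    · intro hs
      have : SepOn Γ {v0} := by simpa using hs
      exact not_sepOn_singleton Γ v0 this
  have hS1 : {v0} ∈ Finset.univ.filter P := Finset.mem_filter.mpr ⟨Finset.mem_univ _, h1P⟩
  obtain ⟨A, hA𝒮, hAmax⟩ :=
    Finset.exists_max_image (Finset.univ.filter P) Finset.card ⟨{v0}, hS1⟩
  have hAP : P A := (Finset.mem_filter.mp hA𝒮).2
  have hAproper : (↑A : Set (Fin n)) ≠ Set.univ := hAP.1
  have hAins : ¬ SepOn Γ ↑A := hAP.2
  have hm1 : 1 ≤ A.card := by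
    have := hAmax {v0} hS1
    simpa using this
  have hmn : A.card < n := by
    have hne : A ≠ Finset.univ := fun he => hAproper (by rw [he, Finset.coe_univ])
    have := Finset.card_lt_card (Finset.ssubset_univ_iff.mpr hne)
    simpa using this
  have hmax' : ∀ F : Finset (Fin n), F.card < n → A.card < F.card → SepOn Γ ↑F := by
    intro F hFn hFA
    by_contra hFsep
    have hFproper : (↑F : Set (Fin n)) ≠ Set.univ := by
      intro he
      have hF : F = Finset.univ := Finset.coe_injective (by rw [he, Finset.coe_univ])
      rw [hF] at hFn
      simp at hFn
    have hmemF : F ∈ Finset.univ.filter P :=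
      Finset.mem_filter.mpr ⟨Finset.mem_univ F, hFproper, hFsep⟩
    exact absurd (hAmax F hmemF) (not_le.mpr hFA)
  by_cases hc : A.card = n - 1
  · -- the complement of A is a single good vertex
    have hAc : Aᶜ.card = 1 := by
      have := Finset.card_add_card_compl A
      simp only [Fintype.card_fin] at this
      omega
    obtain ⟨u, hu⟩ := Finset.card_eq_one.mp hAc
    refine ⟨u, ?_⟩
    have hAset : (↑A : Set (Fin n)) = {u}ᶜ := by
      ext z
      simp only [Set.mem_compl_iff, Set.mem_singleton_iff,
        Finset.mem_coe]
      constructor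
      · intro hz hzu
        have : z ∈ Aᶜ := by rw [hu]; simp [hzu]
        exact (Finset.mem_compl.mp this) hz
      · intro hz
        by_contra hzA
        have : z ∈ Aᶜ := Finset.mem_compl.mpr hzA
        rw [hu] at this
        exact hz (by simpa using this)
    rw [← hAset]
    exact hAins
  · by_cases hc3 : 3 ≤ A.card
    · -- middle case
      have htype : ∀ w ∉ (↑A : Set (Fin n)), ∃ t, ∀ a ∈ (↑A : Set (Fin n)),
          lab Γ w a = t := by
        intro w hw
        have hwF : w ∉ A := by simpa using hw
        have hcard : (insert w A).card = A.card + 1 := Finset.card_insert_of_notMem hwF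
        have hsep : SepOn Γ ↑(insert w A) := hmax' (insert w A) (by omega) (by omega)
        rw [Finset.coe_insert] at hsep
        exact typing Γ hAins hw hsep
      have hA2 : ∀ a ∈ (↑A : Set (Fin n)), ∃ a' ∈ (↑A : Set (Fin n)), a' ≠ a := by
        intro a ha
        have haF : a ∈ A := by simpa using ha
        have : (A.erase a).Nonempty := Finset.card_pos.mp (by
          rw [Finset.card_erase_of_mem haF]; omega)
        obtain ⟨a', ha'⟩ := this
        exact ⟨a', by simpa using Finset.mem_of_mem_erase ha', Finset.ne_of_mem_erase ha'⟩
      obtain ⟨a, ha⟩ : A.Nonempty := Finset.card_pos.mp (by omega)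
      exact ⟨a, case_mid Γ hU hAins hAproper htype hA2 a (by simpa using ha)⟩
    · -- A.card = 1 or 2
      have h12 : A.card = 1 ∨ A.card = 2 := by omega
      rcases h12 with h1 | h2
      swap
      · -- card 2 : A itself is separable, contradiction
        exfalso
        obtain ⟨a, b, hab, hA⟩ := Finset.card_eq_two.mp h2
        apply hAins
        rw [hA]
        have : (↑({a, b} : Finset (Fin n)) : Set (Fin n)) = {a, b} := by simp
        rw [this]
        exact sep_pair Γ hab
      · -- base case : impossible
        exfalso
        have hsepv : SepOn Γ {v0}ᶜ := by
          have hcc : ({v0}ᶜ : Finset (Fin n)).card = n - 1 := by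
            rw [Finset.card_compl]
            simp
          have : SepOn Γ ↑({v0}ᶜ : Finset (Fin n)) := hmax' {v0}ᶜ (by omega) (by omega)
          rwa [Finset.coe_compl, Finset.coe_singleton] at this
        have htri : ∀ p q r : Fin n, p ≠ q → p ≠ r → q ≠ r → SepOn Γ {p, q, r} := by
          intro p q r hpq hpr hqr
          have hcard : ({p, q, r} : Finset (Fin n)).card = 3 := by
            rw [Finset.card_insert_of_notMem (by simp [hpq, hpr]),
              Finset.card_insert_of_notMem (by simp [hqr]), Finset.card_singleton]
          have : SepOn Γ ↑({p, q, r} : Finset (Fin n)) :=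
            hmax' {p, q, r} (by omega) (by omega)
          simpa using this
        have hquad : ∀ p q r s : Fin n, p ≠ q → p ≠ r → p ≠ s → q ≠ r → q ≠ s → r ≠ s →
            SepOn Γ {p, q, r, s} := by
          intro p q r s hpq hpr hps hqr hqs hrs
          have hcard : ({p, q, r, s} : Finset (Fin n)).card = 4 := by
            rw [Finset.card_insert_of_notMem (by simp [hpq, hpr, hps]),
              Finset.card_insert_of_notMem (by simp [hqr, hqs]),
              Finset.card_insert_of_notMem (by simp [hrs]), Finset.card_singleton]
          have : SepOn Γ ↑({p, q, r, s} : Finset (Fin n)) :=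
            hmax' {p, q, r, s} (by omega) (by omega)
          simpa using this
        exact case_base Γ hU hsepv htri hquad
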